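/- arXiv:1211.1809 — 5 statements merged into one kernel-verified Lean document; each statement's English description precedes it below -/
import Mathlib

section
/- Let E be a seminormed real vector space, let τ > 0, T > 0, let N ≥ 1 with Nτ ≤ T, and let v^0, v^1, …, v^N ∈ E. For 1 ≤ m ≤ N set v̄^{m-1/2} = (v^{m-1} + v^m)/2. Then for every 1 ≤ n ≤ N one has τ‖v^n‖ ≤ 2√T · ( ∑_{m=1}^n τ‖v̄^{m-1/2}‖² )^{1/2} + τ‖v^0‖. -/
lemma tele_aux {E : Type*} [SeminormedAddCommGroup E] (v : ℕ → E) :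
    ∀ n, 1 ≤ n → ‖v n‖ ≤ (∑ m ∈ Finset.Icc 1 n, ‖v (m - 1) + v m‖) + ‖v 0‖ := by
  intro n hn
  induction n with
  | zero => omega
  | succ k ih =>
    rcases Nat.eq_or_lt_of_le hn with h | h
    · simp [← h, Finset.Icc_self]
      calc ‖v 1‖ = ‖(v 0 + v 1) - v 0‖ := by congr 1; abel
        _ ≤ ‖v 0 + v 1‖ + ‖v 0‖ := norm_sub_le _ _
    · have hk : 1 ≤ k := by omega
      have step : ‖v (k+1)‖ ≤ ‖v k + v (k+1)‖ + ‖v k‖ := by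
        calc ‖v (k+1)‖ = ‖(v k + v (k+1)) - v k‖ := by congr 1; abel
          _ ≤ _ := norm_sub_le _ _
      rw [Finset.sum_Icc_succ_top (by omega : 1 ≤ k+1)]
      have := ih hk
      simp only [Nat.add_sub_cancel]
      linarith

theorem stmt_1 {E : Type*} [SeminormedAddCommGroup E] [NormedSpace ℝ E]
    (τ T : ℝ) (hτ : 0 < τ) (hT : 0 < T) (N : ℕ) (hN : 1 ≤ N) (hNT : N * τ ≤ T)
    (v : ℕ → E) :
    ∀ n, 1 ≤ n → n ≤ N →
      τ * ‖v n‖ ≤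
        2 * Real.sqrt T *
            Real.sqrt (∑ m ∈ Finset.Icc 1 n, τ * ‖(2 : ℝ)⁻¹ • (v (m - 1) + v m)‖ ^ 2) +
          τ * ‖v 0‖ := by
  intro n hn hnN
  set b : ℕ → ℝ := fun m => ‖(2 : ℝ)⁻¹ • (v (m - 1) + v m)‖ with hb
  have hbnorm : ∀ m, ‖v (m - 1) + v m‖ = 2 * b m := by
    intro m
    rw [hb]
    simp only [norm_smul, Real.norm_eq_abs]
    rw [abs_of_pos (by norm_num : (0:ℝ) < 2⁻¹)]
    ring
  have h1 : ‖v n‖ ≤ 2 * (∑ m ∈ Finset.Icc 1 n, b m) + ‖v 0‖ := by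
    have := tele_aux v n hn
    simpa [hbnorm, Finset.mul_sum] using this
  set S := ∑ m ∈ Finset.Icc 1 n, τ * b m ^ 2 with hS
  have hSnn : 0 ≤ S :=
    Finset.sum_nonneg fun m _ => by positivity
  -- Cauchy-Schwarz: (∑ τ b)² ≤ (∑ τ)(∑ τ b²) = nτ S ≤ T S
  have hcs : (∑ m ∈ Finset.Icc 1 n, τ * b m) ^ 2 ≤ (n * τ) * S := by
    have := Finset.sum_mul_sq_le_sq_mul_sq (Finset.Icc 1 n)
      (fun _ => Real.sqrt τ) (fun m => Real.sqrt τ * b m)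
    have hτs : Real.sqrt τ ^ 2 = τ := Real.sq_sqrt hτ.le
    have e1 : ∀ m : ℕ, Real.sqrt τ * (Real.sqrt τ * b m) = τ * b m := by
      intro m; rw [← mul_assoc, Real.mul_self_sqrt hτ.le]
    have e2 : ∀ m : ℕ, (Real.sqrt τ * b m) ^ 2 = τ * b m ^ 2 := by
      intro m; rw [mul_pow, hτs]
    simp only [e1, e2] at this
    calc (∑ m ∈ Finset.Icc 1 n, τ * b m) ^ 2
        ≤ (∑ _m ∈ Finset.Icc 1 n, Real.sqrt τ ^ 2) * S := this
      _ = (n * τ) * S := by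
          simp [Finset.sum_const, Nat.card_Icc, hτs, nsmul_eq_mul]
  have hnτT : (n : ℝ) * τ ≤ T := by
    calc (n : ℝ) * τ ≤ N * τ := by
          apply mul_le_mul_of_nonneg_right _ hτ.le
          exact_mod_cast hnN
      _ ≤ T := hNT
  have hcs2 : (∑ m ∈ Finset.Icc 1 n, τ * b m) ^ 2 ≤ T * S :=
    hcs.trans (mul_le_mul_of_nonneg_right hnτT hSnn)
  have hsum_nn : 0 ≤ ∑ m ∈ Finset.Icc 1 n, τ * b m :=
    Finset.sum_nonneg fun m _ => by positivity
  have key : ∑ m ∈ Finset.Icc 1 n, τ * b m ≤ Real.sqrt T * Real.sqrt S := by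
    rw [← Real.sqrt_mul hT.le]
    exact (Real.le_sqrt hsum_nn (by positivity)).mpr hcs2
  have h2 : τ * ‖v n‖ ≤ 2 * (∑ m ∈ Finset.Icc 1 n, τ * b m) + τ * ‖v 0‖ := by
    have := mul_le_mul_of_nonneg_left h1 hτ.le
    calc τ * ‖v n‖ ≤ τ * (2 * (∑ m ∈ Finset.Icc 1 n, b m) + ‖v 0‖) := this
      _ = 2 * (∑ m ∈ Finset.Icc 1 n, τ * b m) + τ * ‖v 0‖ := by
          rw [show τ * (2 * (∑ m ∈ Finset.Icc 1 n, b m) + ‖v 0‖)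
              = 2 * (τ * ∑ m ∈ Finset.Icc 1 n, b m) + τ * ‖v 0‖ from by ring,
            Finset.mul_sum]
  calc τ * ‖v n‖ ≤ 2 * (∑ m ∈ Finset.Icc 1 n, τ * b m) + τ * ‖v 0‖ := h2
    _ ≤ 2 * (Real.sqrt T * Real.sqrt S) + τ * ‖v 0‖ := by linarith
    _ = 2 * Real.sqrt T * Real.sqrt S + τ * ‖v 0‖ := by ring
end

section
/- Let τ > 0, C ≥ 0, B ≥ 0 with Cτ ≤ 1/2, let N ≥ 1, and let a_0, a_1, …, a_N be nonnegative real numbers satisfying a_{n+1} ≤ a_n + Cτ(a_{n+1} + a_n + a_{n-1}) + B for all 1 ≤ n ≤ N−1. Then for every 0 ≤ n ≤ N one has a_n ≤ exp(6Cτn) · ( max(a_0, a_1) + 3nB ). -/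
theorem stmt_2 (τ C B : ℝ) (hτ : 0 < τ) (hC : 0 ≤ C) (hB : 0 ≤ B)
    (hCτ : C * τ ≤ 1 / 2) (N : ℕ) (hN : 1 ≤ N) (a : ℕ → ℝ)
    (ha : ∀ n, n ≤ N → 0 ≤ a n)
    (hrec : ∀ n, 1 ≤ n → n ≤ N - 1 →
      a (n + 1) ≤ a n + C * τ * (a (n + 1) + a n + a (n - 1)) + B) :
    ∀ n, n ≤ N →
      a n ≤ Real.exp (6 * C * τ * n) * (max (a 0) (a 1) + 3 * n * B) := by
  set M := max (a 0) (a 1) with hM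
  have hM0 : 0 ≤ M := le_trans (ha 0 (by omega)) (le_max_left _ _)
  have hct : 0 ≤ C * τ := mul_nonneg hC hτ.le
  -- monotone bound function
  set E : ℕ → ℝ := fun n => Real.exp (6 * C * τ * n) * (M + 3 * n * B) with hE
  have hE0 : ∀ n, 0 ≤ E n := by
    intro n
    exact mul_nonneg (Real.exp_pos _).le (by positivity)
  have hEmono : ∀ n, E n ≤ E (n + 1) := by
    intro n
    apply mul_le_mul
    · apply Real.exp_le_exp.2
      have : (n : ℝ) ≤ (n : ℝ) + 1 := by linarith
      push_cast
      nlinarith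
    · push_cast; nlinarith
    · positivity
    · exact (Real.exp_pos _).le
  intro n
  induction n using Nat.strong_induction_on with
  | _ n ih =>
    match n with
    | 0 =>
      intro _
      have : a 0 ≤ M := le_max_left _ _
      have h1 : (1 : ℝ) ≤ Real.exp (6 * C * τ * 0) := by
        rw [Real.one_le_exp_iff]; positivity
      push_cast
      nlinarith [hE0 0]
    | 1 =>
      intro _
      have : a 1 ≤ M := le_max_right _ _
      have h1 : (1 : ℝ) ≤ Real.exp (6 * C * τ * 1) := by
        rw [Real.one_le_exp_iff]; positivity
      push_cast
      nlinarith
    | (k + 2) =>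
      intro hn
      have hk1 : a (k + 1) ≤ E (k + 1) := ih (k + 1) (by omega) (by omega)
      have hk0 : a k ≤ E (k + 1) := le_trans (ih k (by omega) (by omega)) (hEmono k)
      have hr := hrec (k + 1) (by omega) (by omega)
      simp only [Nat.add_sub_cancel] at hr
      have hEk : 0 ≤ E (k + 1) := hE0 (k + 1)
      -- a (k+2) ≤ (1 + 6 C τ) * E (k+1) + 3 B
      have h3 : (0:ℝ) < 1 - C * τ := by linarith
      have h1' : (1 - C * τ) * a (k + 2) ≤ (1 + 2 * (C * τ)) * E (k + 1) + B := by
        nlinarith [mul_le_mul_of_nonneg_left hk1 (show (0:ℝ) ≤ 1 + C * τ by linarith),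
          mul_le_mul_of_nonneg_left hk0 hct]
      have key : a (k + 2) ≤ (1 + 6 * (C * τ)) * E (k + 1) + 3 * B := by
        nlinarith [h1', h3, mul_nonneg hct hEk, mul_nonneg hct hB,
          mul_le_mul_of_nonneg_left hCτ (mul_nonneg hct hEk),
          mul_le_mul_of_nonneg_left hCτ hB, ha (k + 2) hn]
      have hexp : (1 : ℝ) + 6 * (C * τ) ≤ Real.exp (6 * C * τ) := by
        have := Real.add_one_le_exp (6 * C * τ)
        linarith
      have h1 : (1 : ℝ) ≤ Real.exp (6 * C * τ * ((k : ℝ) + 2)) := by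
        rw [Real.one_le_exp_iff]; positivity
      have step1 : (1 + 6 * (C * τ)) * E (k + 1) ≤
          Real.exp (6 * C * τ) * E (k + 1) :=
        mul_le_mul_of_nonneg_right hexp hEk
      have step2 : Real.exp (6 * C * τ) * E (k + 1)
          = Real.exp (6 * C * τ * ((k : ℝ) + 2)) * (M + 3 * ((k : ℝ) + 1) * B) := by
        simp only [hE]
        rw [← mul_assoc, ← Real.exp_add]
        have harg : 6 * C * τ + 6 * C * τ * ((k + 1 : ℕ) : ℝ) = 6 * C * τ * ((k : ℝ) + 2) := by
          push_cast; ring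
        rw [harg]; push_cast; ring
      have final : Real.exp (6 * C * τ * ((k : ℝ) + 2)) * (M + 3 * ((k : ℝ) + 1) * B) + 3 * B
          ≤ Real.exp (6 * C * τ * ((k : ℝ) + 2)) * (M + 3 * ((k : ℝ) + 2) * B) := by
        nlinarith
      calc a (k + 2) ≤ (1 + 6 * (C * τ)) * E (k + 1) + 3 * B := key
        _ ≤ Real.exp (6 * C * τ * ((k : ℝ) + 2)) * (M + 3 * ((k : ℝ) + 1) * B) + 3 * B := by
            rw [← step2]; linarith
        _ ≤ Real.exp (6 * C * τ * ((k : ℝ) + 2)) * (M + 3 * ((k : ℝ) + 2) * B) := final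
        _ = Real.exp (6 * C * τ * ((k + 2 : ℕ) : ℝ)) * (M + 3 * ((k + 2 : ℕ) : ℝ) * B) := by
            push_cast; ring_nf
end

section
/- Let E be a real Banach space, let τ > 0, N ≥ 1, T = Nτ, set t_n = nτ and t_{n+1/2} = (n + 1/2)τ, and let f : ℝ → E be three times continuously differentiable on [0, T]. Then ∑_{n=0}^{N−1} τ ‖ (f(t_{n+1}) − f(t_n))/τ − f'(t_{n+1/2}) ‖² ≤ (τ⁴/64) · ∫_0^T ‖f'''(s)‖² ds. -/
open Set MeasureTheory intervalIntegral

/-- Cauchy–Schwarz on an interval. -/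
lemma cs_interval {a b : ℝ} (hab : a ≤ b) {φ : ℝ → ℝ}
    (hφ : ContinuousOn φ (Set.Icc a b)) (hφ0 : ∀ x ∈ Set.Icc a b, 0 ≤ φ x) :
    (∫ s in a..b, φ s) ^ 2 ≤ (b - a) * ∫ s in a..b, φ s ^ 2 := by
  set μ : Measure ℝ := volume.restrict (Set.Ioc a b) with hμ
  haveI : IsFiniteMeasure μ := by
    constructor
    rw [hμ, Measure.restrict_apply_univ]
    exact measure_Ioc_lt_top
  have hsub : Set.Ioc a b ⊆ Set.Icc a b := Set.Ioc_subset_Icc_self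
  have hmeas : AEStronglyMeasurable φ μ :=
    (hφ.mono hsub).aestronglyMeasurable measurableSet_Ioc
  obtain ⟨M, hM⟩ := isCompact_Icc.exists_bound_of_continuousOn hφ
  have hbd : ∀ᵐ x ∂μ, ‖φ x‖ ≤ M := by
    filter_upwards [ae_restrict_mem measurableSet_Ioc] with x hx
    exact hM x (hsub hx)
  have hmem : MemLp φ (ENNReal.ofReal 2) μ := MemLp.of_bound hmeas M hbd
  have hmem1 : MemLp (fun _ : ℝ => (1 : ℝ)) (ENNReal.ofReal 2) μ := memLp_const 1
  have hpq : Real.HolderConjugate 2 2 := Real.HolderConjugate.two_two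
  have h0 : 0 ≤ᵐ[μ] φ := by
    filter_upwards [ae_restrict_mem measurableSet_Ioc] with x hx
    exact hφ0 x (hsub hx)
  have h1 : 0 ≤ᵐ[μ] (fun _ : ℝ => (1 : ℝ)) := Filter.Eventually.of_forall fun _ => zero_le_one
  have H := MeasureTheory.integral_mul_le_Lp_mul_Lq_of_nonneg hpq h0 h1 hmem hmem1
  simp only [mul_one, Real.one_rpow] at H
  have hμuniv : ∫ _, (1 : ℝ) ∂μ = b - a := by
    rw [MeasureTheory.integral_const, smul_eq_mul, mul_one, hμ, measureReal_restrict_apply_univ,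
      Real.volume_real_Ioc_of_le hab]
  have hrw2 : ∫ x, φ x ^ (2 : ℝ) ∂μ = ∫ x, φ x ^ 2 ∂μ := by
    apply MeasureTheory.integral_congr_ae
    filter_upwards with x
    rw [show (2 : ℝ) = ((2 : ℕ) : ℝ) by norm_num, Real.rpow_natCast]
  rw [hμuniv, hrw2] at H
  have hA : 0 ≤ ∫ x, φ x ^ 2 ∂μ := integral_nonneg fun x => sq_nonneg _
  have hL : 0 ≤ ∫ x, φ x ∂μ := integral_nonneg_of_ae h0
  have hiav : ∫ s in a..b, φ s = ∫ x, φ x ∂μ := by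
    rw [intervalIntegral.integral_of_le hab]
  have hiav2 : ∫ s in a..b, φ s ^ 2 = ∫ x, φ x ^ 2 ∂μ := by
    rw [intervalIntegral.integral_of_le hab]
  rw [hiav, hiav2]
  have hsq := pow_le_pow_left₀ hL H 2
  calc (∫ x, φ x ∂μ) ^ 2
      ≤ ((∫ x, φ x ^ 2 ∂μ) ^ (1 / (2:ℝ)) * (b - a) ^ (1 / (2:ℝ))) ^ 2 := hsq
    _ = (∫ x, φ x ^ 2 ∂μ) * (b - a) := by
        rw [mul_pow, ← Real.rpow_natCast ((∫ x, φ x ^ 2 ∂μ) ^ (1 / (2:ℝ))) 2,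
          ← Real.rpow_natCast ((b - a) ^ (1 / (2:ℝ))) 2,
          ← Real.rpow_mul hA, ← Real.rpow_mul (by linarith : (0:ℝ) ≤ b - a)]
        norm_num
    _ = (b - a) * ∫ x, φ x ^ 2 ∂μ := by ring

/-- Second order Taylor with integral remainder, vector valued, within `Icc 0 T`. -/
lemma taylor2 {E : Type*} [NormedAddCommGroup E] [NormedSpace ℝ E] [CompleteSpace E]
    {T : ℝ} {f f1 f2 f3 : ℝ → E}
    (hD1 : ∀ x ∈ Set.Icc 0 T, HasDerivWithinAt f (f1 x) (Set.Icc 0 T) x)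
    (hD2 : ∀ x ∈ Set.Icc 0 T, HasDerivWithinAt f1 (f2 x) (Set.Icc 0 T) x)
    (hD3 : ∀ x ∈ Set.Icc 0 T, HasDerivWithinAt f2 (f3 x) (Set.Icc 0 T) x)
    (hc3 : ContinuousOn f3 (Set.Icc 0 T))
    {c m : ℝ} (hc : c ∈ Set.Icc 0 T) (hm : m ∈ Set.Icc 0 T) :
    ∫ s in m..c, ((c - s) ^ 2 / 2) • f3 s =
      f c - f m - (c - m) • f1 m - ((c - m) ^ 2 / 2) • f2 m := by
  have hsub : Set.uIcc m c ⊆ Set.Icc 0 T := Set.uIcc_subset_Icc hm hc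
  have hcf : ContinuousOn f (Set.Icc 0 T) := fun x hx => (hD1 x hx).continuousWithinAt
  have hcf1 : ContinuousOn f1 (Set.Icc 0 T) := fun x hx => (hD2 x hx).continuousWithinAt
  have hcf2 : ContinuousOn f2 (Set.Icc 0 T) := fun x hx => (hD3 x hx).continuousWithinAt
  set F : ℝ → E := fun s => f s + (c - s) • f1 s + ((c - s) ^ 2 / 2) • f2 s with hF
  have hFc : ContinuousOn F (Set.Icc 0 T) := by
    apply ContinuousOn.add
    apply ContinuousOn.add hcf
    · exact ((continuous_const.sub continuous_id).continuousOn).smul hcf1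
    · exact ((((continuous_const.sub continuous_id).pow 2).div_const 2).continuousOn).smul hcf2
  have hderiv : ∀ x ∈ Set.Ioo (min m c) (max m c),
      HasDerivWithinAt F (((c - x) ^ 2 / 2) • f3 x) (Set.Ioi x) x := by
    intro x hx
    have h0x : (0 : ℝ) < x := lt_of_le_of_lt (le_min hm.1 hc.1) hx.1
    have hxT : x < T := lt_of_lt_of_le hx.2 (max_le hm.2 hc.2)
    have hxI : x ∈ Set.Icc (0:ℝ) T := ⟨h0x.le, hxT.le⟩
    have hnx : Set.Icc (0:ℝ) T ∈ nhds x := Icc_mem_nhds h0x hxT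
    have h1 : HasDerivAt f (f1 x) x := (hD1 x hxI).hasDerivAt hnx
    have h2 : HasDerivAt f1 (f2 x) x := (hD2 x hxI).hasDerivAt hnx
    have h3 : HasDerivAt f2 (f3 x) x := (hD3 x hxI).hasDerivAt hnx
    have hid : HasDerivAt (fun s : ℝ => c - s) (-1) x := by
      simpa using (hasDerivAt_id x).const_sub c
    have hsq : HasDerivAt (fun s : ℝ => (c - s) ^ 2 / 2) (-(c - x)) x := by
      have h : HasDerivAt (fun s : ℝ => (c - s) ^ 2 / 2) (((2:ℕ) * (c - x) ^ (2 - 1) * -1) / 2) x :=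
        (hid.fun_pow 2).div_const 2
      convert h using 1
      ring
    have htot := (h1.add (hid.smul h2)).add (hsq.smul h3)
    have : HasDerivAt F (((c - x) ^ 2 / 2) • f3 x) x := by
      convert htot using 1
      · rfl
      module
    exact this.hasDerivWithinAt
  have hint : IntervalIntegrable (fun s => ((c - s) ^ 2 / 2) • f3 s) volume m c := by
    apply ContinuousOn.intervalIntegrable
    exact ((((continuous_const.sub continuous_id).pow 2).div_const 2).continuousOn).smul
      (hc3.mono hsub)
  have := intervalIntegral.integral_eq_sub_of_hasDeriv_right (hFc.mono hsub) hderiv hint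
  rw [this, hF]
  simp only [sub_self, zero_smul, ne_eq, OfNat.ofNat_ne_zero, not_false_eq_true, zero_pow,
    zero_div, add_zero]
  abel

/-- Key per-interval estimate. -/
lemma key_interval {E : Type*} [NormedAddCommGroup E] [NormedSpace ℝ E] [CompleteSpace E]
    {T : ℝ} {f f1 f2 f3 : ℝ → E}
    (hD1 : ∀ x ∈ Set.Icc 0 T, HasDerivWithinAt f (f1 x) (Set.Icc 0 T) x)
    (hD2 : ∀ x ∈ Set.Icc 0 T, HasDerivWithinAt f1 (f2 x) (Set.Icc 0 T) x)
    (hD3 : ∀ x ∈ Set.Icc 0 T, HasDerivWithinAt f2 (f3 x) (Set.Icc 0 T) x)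
    (hc3 : ContinuousOn f3 (Set.Icc 0 T))
    {τ a b : ℝ} (hτ : 0 < τ) (ha : 0 ≤ a) (hb : b ≤ T) (hab : b = a + τ) :
    τ * ‖τ⁻¹ • (f b - f a) - f1 ((a + b) / 2)‖ ^ 2 ≤
      τ ^ 4 / 64 * ∫ s in a..b, ‖f3 s‖ ^ 2 := by
  set m := (a + b) / 2 with hmdef
  have hamb : a ≤ b := by linarith
  have ham : a ≤ m := by rw [hmdef]; linarith
  have hmb : m ≤ b := by rw [hmdef]; linarith
  have haI : a ∈ Set.Icc (0:ℝ) T := ⟨ha, le_trans hamb hb⟩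
  have hbI : b ∈ Set.Icc (0:ℝ) T := ⟨le_trans ha hamb, hb⟩
  have hmI : m ∈ Set.Icc (0:ℝ) T := ⟨le_trans ha ham, le_trans hmb hb⟩
  have hsubab : ∀ {x y : ℝ}, a ≤ x → y ≤ b → Set.Icc x y ⊆ Set.Icc 0 T := by
    intro x y hx hy
    exact Set.Icc_subset_Icc (le_trans ha hx) (le_trans hy hb)
  have hI1 := taylor2 hD1 hD2 hD3 hc3 hbI hmI
  have hI2 := taylor2 hD1 hD2 hD3 hc3 haI hmI
  have hbm : b - m = τ / 2 := by rw [hmdef, hab]; ring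
  have ham' : a - m = -(τ / 2) := by rw [hmdef, hab]; ring
  have hid : f b - f a - τ • f1 m =
      (∫ s in m..b, ((b - s) ^ 2 / 2) • f3 s) - ∫ s in m..a, ((a - s) ^ 2 / 2) • f3 s := by
    rw [hI1, hI2, hbm, ham']
    have hτ2 : τ = τ / 2 + τ / 2 := by ring
    rw [show (-(τ/2))^2 = (τ/2)^2 by ring]
    module
  -- continuity facts for integrability
  have hcn : ContinuousOn (fun s => ‖f3 s‖) (Set.Icc 0 T) := hc3.norm
  have int_norm : ∀ {x y : ℝ}, a ≤ x → y ≤ b → x ≤ y →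
      IntervalIntegrable (fun s => (τ^2/8) * ‖f3 s‖) volume x y := by
    intro x y hx hy hxy
    apply ContinuousOn.intervalIntegrable
    apply ContinuousOn.mul continuousOn_const
    apply hcn.mono
    rw [Set.uIcc_of_le hxy]
    exact hsubab hx hy
  have hbound1 : ‖∫ s in m..b, ((b - s) ^ 2 / 2) • f3 s‖ ≤
      ∫ s in m..b, (τ^2/8) * ‖f3 s‖ := by
    refine (intervalIntegral.norm_integral_le_integral_norm hmb).trans ?_
    apply intervalIntegral.integral_mono_on hmb ?_ (int_norm ham le_rfl hmb)
    · intro x hx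
      rw [norm_smul, Real.norm_of_nonneg (by positivity)]
      have h1 : 0 ≤ b - x := by linarith [hx.2]
      have h2 : b - x ≤ τ / 2 := by
        have := hx.1; rw [hbm] at *; linarith
      apply mul_le_mul_of_nonneg_right _ (norm_nonneg _)
      nlinarith
    · apply ContinuousOn.intervalIntegrable
      apply ContinuousOn.norm
      apply ContinuousOn.smul
      · exact (((continuous_const.sub continuous_id).pow 2).div_const 2).continuousOn
      · apply hc3.mono; rw [Set.uIcc_of_le hmb]; exact hsubab ham le_rfl
  have hbound2 : ‖∫ s in m..a, ((a - s) ^ 2 / 2) • f3 s‖ ≤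
      ∫ s in a..m, (τ^2/8) * ‖f3 s‖ := by
    rw [intervalIntegral.integral_symm a m, norm_neg]
    refine (intervalIntegral.norm_integral_le_integral_norm ham).trans ?_
    apply intervalIntegral.integral_mono_on ham ?_ (int_norm le_rfl hmb ham)
    · intro x hx
      rw [norm_smul, Real.norm_of_nonneg (by positivity)]
      have h1 : a - x ≤ 0 := by linarith [hx.1]
      have h2 : -(τ/2) ≤ a - x := by
        have := hx.2; rw [hmdef] at *; nlinarith
      apply mul_le_mul_of_nonneg_right _ (norm_nonneg _)
      nlinarith
    · apply ContinuousOn.intervalIntegrable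
      apply ContinuousOn.norm
      apply ContinuousOn.smul
      · exact (((continuous_const.sub continuous_id).pow 2).div_const 2).continuousOn
      · apply hc3.mono; rw [Set.uIcc_of_le ham]; exact hsubab le_rfl hmb
  have hsum : (∫ s in a..m, (τ^2/8) * ‖f3 s‖) + ∫ s in m..b, (τ^2/8) * ‖f3 s‖ =
      ∫ s in a..b, (τ^2/8) * ‖f3 s‖ :=
    intervalIntegral.integral_add_adjacent_intervals (int_norm le_rfl hmb ham)
      (int_norm ham le_rfl hmb)
  set J := ∫ s in a..b, ‖f3 s‖ with hJdef
  have hconst : ∫ s in a..b, (τ^2/8) * ‖f3 s‖ = (τ^2/8) * J := by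
    rw [hJdef, ← intervalIntegral.integral_const_mul]
  have hmain : ‖f b - f a - τ • f1 m‖ ≤ (τ^2/8) * J := by
    rw [hid]
    calc ‖(∫ s in m..b, ((b - s) ^ 2 / 2) • f3 s) - ∫ s in m..a, ((a - s) ^ 2 / 2) • f3 s‖
        ≤ ‖∫ s in m..b, ((b - s) ^ 2 / 2) • f3 s‖ +
            ‖∫ s in m..a, ((a - s) ^ 2 / 2) • f3 s‖ := norm_sub_le _ _
      _ ≤ (∫ s in m..b, (τ^2/8) * ‖f3 s‖) + ∫ s in a..m, (τ^2/8) * ‖f3 s‖ :=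
          add_le_add hbound1 hbound2
      _ = (τ^2/8) * J := by rw [add_comm, hsum, hconst]
  set K := ∫ s in a..b, ‖f3 s‖ ^ 2 with hKdef
  have hCS : J ^ 2 ≤ τ * K := by
    have := cs_interval hamb (φ := fun s => ‖f3 s‖) (hcn.mono (hsubab le_rfl le_rfl))
      (fun x _ => norm_nonneg _)
    rw [show b - a = τ by rw [hab]; ring] at this
    exact this
  have hτR : τ • (τ⁻¹ • (f b - f a) - f1 m) = f b - f a - τ • f1 m := by
    rw [smul_sub, smul_smul, mul_inv_cancel₀ hτ.ne', one_smul]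
  have hnR : τ * ‖τ⁻¹ • (f b - f a) - f1 m‖ ≤ (τ^2/8) * J := by
    have : τ * ‖τ⁻¹ • (f b - f a) - f1 m‖ = ‖τ • (τ⁻¹ • (f b - f a) - f1 m)‖ := by
      rw [norm_smul, Real.norm_of_nonneg hτ.le]
    rw [this, hτR]
    exact hmain
  have h6 : (τ * ‖τ⁻¹ • (f b - f a) - f1 m‖) ^ 2 ≤ ((τ^2/8) * J) ^ 2 :=
    pow_le_pow_left₀ (by positivity) hnR 2
  have hK0 : 0 ≤ K := by
    rw [hKdef]
    apply intervalIntegral.integral_nonneg hamb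
    intro x _; positivity
  nlinarith [norm_nonneg (τ⁻¹ • (f b - f a) - f1 m), sq_nonneg J,
    mul_le_mul_of_nonneg_left hCS (show (0:ℝ) ≤ τ^2/64 by positivity)]

theorem stmt_7 {E : Type*} [NormedAddCommGroup E] [NormedSpace ℝ E] [CompleteSpace E]
    (τ : ℝ) (hτ : 0 < τ) (N : ℕ) (hN : 1 ≤ N) (T : ℝ) (hT : T = N * τ)
    (f : ℝ → E) (hf : ContDiffOn ℝ 3 f (Set.Icc 0 T)) :
    ∑ n ∈ Finset.range N,
        τ * ‖τ⁻¹ • (f ((n + 1) * τ) - f (n * τ)) -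
              derivWithin f (Set.Icc 0 T) ((n + 1 / 2) * τ)‖ ^ 2 ≤
      τ ^ 4 / 64 * ∫ s in (0 : ℝ)..T, ‖iteratedDerivWithin 3 f (Set.Icc 0 T) s‖ ^ 2 := by
  have hN1 : (1 : ℝ) ≤ N := by exact_mod_cast hN
  have hT0 : 0 < T := by rw [hT]; nlinarith
  have hS : UniqueDiffOn ℝ (Set.Icc (0:ℝ) T) := uniqueDiffOn_Icc hT0
  set S := Set.Icc (0:ℝ) T with hSdef
  set f1 := derivWithin f S with hf1def
  set f2 := derivWithin f1 S with hf2def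
  set f3 := iteratedDerivWithin 3 f S with hf3def
  have hf1 : ContDiffOn ℝ 2 f1 S := hf.derivWithin hS (by norm_num)
  have hf2 : ContDiffOn ℝ 1 f2 S := hf1.derivWithin hS (by norm_num)
  have hD1 : ∀ x ∈ S, HasDerivWithinAt f (f1 x) S x := fun x hx =>
    ((hf.differentiableOn (by norm_num)) x hx).hasDerivWithinAt
  have hD2 : ∀ x ∈ S, HasDerivWithinAt f1 (f2 x) S x := fun x hx =>
    ((hf1.differentiableOn (by norm_num)) x hx).hasDerivWithinAt
  have hEq : ∀ x ∈ S, f3 x = derivWithin f2 S x := by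
    have h1 : Set.EqOn (iteratedDerivWithin 1 f S) f1 S := fun y hy =>
      by rw [iteratedDerivWithin_one]
    have h2 : Set.EqOn (iteratedDerivWithin 2 f S) f2 S := by
      intro y hy
      rw [show (2:ℕ) = 1 + 1 from rfl, iteratedDerivWithin_succ]
      exact derivWithin_congr h1 (h1 hy)
    intro x hx
    rw [hf3def, show (3:ℕ) = 2 + 1 from rfl, iteratedDerivWithin_succ]
    exact derivWithin_congr h2 (h2 hx)
  have hD3 : ∀ x ∈ S, HasDerivWithinAt f2 (f3 x) S x := by
    intro x hx
    rw [hEq x hx]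
    exact ((hf2.differentiableOn (by norm_num)) x hx).hasDerivWithinAt
  have hc3 : ContinuousOn f3 S := by
    have h : ContDiffOn ℝ 0 (derivWithin f2 S) S := hf2.derivWithin hS (by norm_num)
    exact h.continuousOn.congr hEq
  have hint : ∀ k, k < N → IntervalIntegrable (fun s => ‖f3 s‖ ^ 2) volume
      ((k : ℝ) * τ) (((k : ℕ) + 1 : ℕ) * τ) := by
    intro k hk
    apply ContinuousOn.intervalIntegrable
    apply (hc3.norm.pow 2).mono
    have hk1 : (k : ℝ) * τ ≤ ((k : ℝ) + 1) * τ := by nlinarith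
    have hkN : ((k : ℝ) + 1) ≤ N := by exact_mod_cast hk
    rw [show ((((k : ℕ) + 1 : ℕ) : ℝ) * τ) = ((k : ℝ) + 1) * τ by push_cast; ring,
      Set.uIcc_of_le hk1, hSdef]
    apply Set.Icc_subset_Icc (by positivity)
    rw [hT]; nlinarith
  calc ∑ n ∈ Finset.range N,
        τ * ‖τ⁻¹ • (f ((n + 1) * τ) - f (n * τ)) - f1 ((n + 1 / 2) * τ)‖ ^ 2
      ≤ ∑ n ∈ Finset.range N,
          τ ^ 4 / 64 * ∫ s in ((n : ℝ) * τ)..(((n : ℝ) + 1) * τ), ‖f3 s‖ ^ 2 := by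
        apply Finset.sum_le_sum
        intro n hn
        have hnN : ((n : ℝ) + 1) ≤ N := by exact_mod_cast Finset.mem_range.mp hn
        have hmid : ((n : ℝ) + 1 / 2) * τ = ((n : ℝ) * τ + ((n : ℝ) + 1) * τ) / 2 := by ring
        rw [hmid]
        apply key_interval hD1 hD2 hD3 hc3 hτ (by positivity) _ (by ring)
        rw [hT]; nlinarith
    _ = τ ^ 4 / 64 * ∑ n ∈ Finset.range N,
          ∫ s in ((n : ℝ) * τ)..(((n : ℝ) + 1) * τ), ‖f3 s‖ ^ 2 := by
        rw [Finset.mul_sum]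
    _ = τ ^ 4 / 64 * ∫ s in (0 : ℝ)..T, ‖f3 s‖ ^ 2 := by
        congr 1
        have h := intervalIntegral.sum_integral_adjacent_intervals
          (a := fun k : ℕ => (k : ℝ) * τ) (μ := volume) (f := fun s => ‖f3 s‖ ^ 2) hint
        simp only [Nat.cast_zero, zero_mul] at h
        rw [← hT] at h
        rw [← h]
        apply Finset.sum_congr rfl
        intro k _
        congr 1
        push_cast
        ring
end

section
/- Let E be a real Banach space, let τ > 0, N ≥ 1, T = Nτ, set t_n = nτ and t_{n+1/2} = (n + 1/2)τ, and let f : ℝ → E be twice continuously differentiable on [0, T]. Then ∑_{n=0}^{N−1} τ ‖ (f(t_n) + f(t_{n+1}))/2 − f(t_{n+1/2}) ‖² ≤ (τ⁴/16) · ∫_0^T ‖f''(s)‖² ds. -/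
open MeasureTheory intervalIntegral Set

/-- Cauchy–Schwarz for interval integrals of nonnegative functions, via quadratic discriminant. -/
lemma my_cs {g : ℝ → ℝ} {a b : ℝ} (hab : a ≤ b) (hg : ContinuousOn g (Set.Icc a b))
    (hg0 : ∀ s ∈ Set.Icc a b, 0 ≤ g s) :
    (∫ s in a..b, g s) ^ 2 ≤ (b - a) * ∫ s in a..b, g s ^ 2 := by
  set X := ∫ s in a..b, g s with hX
  set I := ∫ s in a..b, g s ^ 2 with hI
  have hgi : IntervalIntegrable g volume a b :=
    (hg.mono (by rw [Set.uIcc_of_le hab])).intervalIntegrable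
  have hg2c : ContinuousOn (fun s => g s ^ 2) (Set.Icc a b) := hg.pow 2
  have hg2i : IntervalIntegrable (fun s => g s ^ 2) volume a b :=
    (hg2c.mono (by rw [Set.uIcc_of_le hab])).intervalIntegrable
  have hX0 : 0 ≤ X := intervalIntegral.integral_nonneg hab hg0
  have hI0 : 0 ≤ I := intervalIntegral.integral_nonneg hab fun s hs => sq_nonneg _
  have hL0 : 0 ≤ b - a := by linarith
  have key : ∀ θ : ℝ, 0 ≤ (b - a) * (θ * θ) + (-2 * X) * θ + I := by
    intro θ
    rcases le_or_gt θ 0 with h | h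
    · nlinarith
    · have h2 : (0:ℝ) < 2 * θ := by linarith
      have hpt : ∀ s ∈ Set.Icc a b, g s ≤ θ / 2 + g s ^ 2 / (2 * θ) := by
        intro s hs
        rw [← sub_nonneg]
        have he : θ / 2 + g s ^ 2 / (2 * θ) - g s = (g s - θ) ^ 2 / (2 * θ) := by
          field_simp; ring
        rw [he]; positivity
      have hint2 : IntervalIntegrable (fun s => g s ^ 2 / (2 * θ)) volume a b := by
        simpa [div_eq_mul_inv] using hg2i.mul_const (2 * θ)⁻¹
      have hint : IntervalIntegrable (fun s => θ / 2 + g s ^ 2 / (2 * θ)) volume a b :=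
        IntervalIntegrable.add intervalIntegrable_const hint2
      have h3 : X ≤ ∫ s in a..b, (θ / 2 + g s ^ 2 / (2 * θ)) :=
        intervalIntegral.integral_mono_on hab hgi hint hpt
      have h4 : ∫ s in a..b, (θ / 2 + g s ^ 2 / (2 * θ))
          = (b - a) * (θ / 2) + I / (2 * θ) := by
        rw [intervalIntegral.integral_add intervalIntegrable_const hint2]
        simp only [intervalIntegral.integral_const, smul_eq_mul]
        rw [div_eq_mul_inv I, hI, ← intervalIntegral.integral_mul_const]
        simp [div_eq_mul_inv]
      have h5 : X ≤ (b - a) * (θ / 2) + I / (2 * θ) := h4 ▸ h3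
      have hEq : (b - a) * (θ / 2) + I / (2 * θ) = ((b - a) * (θ * θ) + I) / (2 * θ) := by
        field_simp
      rw [hEq, le_div_iff₀ h2] at h5
      nlinarith
  have hd := discrim_le_zero key
  rw [discrim] at hd
  nlinarith

lemma my_ftc {E : Type*} [NormedAddCommGroup E] [NormedSpace ℝ E] [CompleteSpace E]
    {T : ℝ} {F F' : ℝ → E}
    (hc : ContinuousOn F (Set.Icc 0 T)) (hd : ∀ x ∈ Set.Ioo 0 T, HasDerivAt F (F' x) x)
    (hi : ContinuousOn F' (Set.Icc 0 T)) {a b : ℝ} (ha : 0 ≤ a) (hab : a ≤ b) (hb : b ≤ T) :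
    ∫ s in a..b, F' s = F b - F a := by
  apply intervalIntegral.integral_eq_sub_of_hasDeriv_right_of_le hab
  · exact hc.mono (Set.Icc_subset_Icc ha hb)
  · intro x hx
    exact (hd x ⟨lt_of_le_of_lt ha hx.1, lt_of_lt_of_le hx.2 hb⟩).hasDerivWithinAt
  · exact (hi.mono (by rw [Set.uIcc_of_le hab]; exact Set.Icc_subset_Icc ha hb)).intervalIntegrable

lemma my_interval_est {E : Type*} [NormedAddCommGroup E] [NormedSpace ℝ E] [CompleteSpace E]
    {T : ℝ} (hT0 : 0 < T) {f : ℝ → E} (hf : ContDiffOn ℝ 2 f (Set.Icc 0 T))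
    {a b : ℝ} (ha : 0 ≤ a) (hb : b ≤ T) (hab : a ≤ b) :
    ‖(2 : ℝ)⁻¹ • (f a + f b) - f ((a + b) / 2)‖ ^ 2 ≤
      (b - a) ^ 3 / 16 * ∫ s in a..b, ‖iteratedDerivWithin 2 f (Set.Icc 0 T) s‖ ^ 2 := by
  have hUD : UniqueDiffOn ℝ (Set.Icc (0:ℝ) T) := uniqueDiffOn_Icc hT0
  set S := Set.Icc (0:ℝ) T with hS
  set F1 := derivWithin f S with hF1
  set F2 := iteratedDerivWithin 2 f S with hF2
  have hfc : ContinuousOn f S := hf.continuousOn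
  have hd1 : ∀ x ∈ Set.Ioo (0:ℝ) T, HasDerivAt f (F1 x) x := by
    intro x hx
    exact ((hf.differentiableOn (by norm_num) x (Set.Ioo_subset_Icc_self hx)
      ).hasDerivWithinAt).hasDerivAt (Icc_mem_nhds hx.1 hx.2)
  have hF1cd : ContDiffOn ℝ 1 F1 S := hf.derivWithin hUD (by norm_num)
  have hF1c : ContinuousOn F1 S := hF1cd.continuousOn
  have hF2eq : ∀ x ∈ S, F2 x = derivWithin F1 S x := by
    intro x hx
    rw [hF2, show (2:ℕ) = 1 + 1 from rfl, iteratedDerivWithin_succ',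
      iteratedDerivWithin_one]
  have hd2 : ∀ x ∈ Set.Ioo (0:ℝ) T, HasDerivAt F1 (F2 x) x := by
    intro x hx
    have hxS : x ∈ S := Set.Ioo_subset_Icc_self hx
    rw [hF2eq x hxS]
    exact ((hF1cd.differentiableOn one_ne_zero x hxS).hasDerivWithinAt).hasDerivAt
      (Icc_mem_nhds hx.1 hx.2)
  have hF2c : ContinuousOn F2 S :=
    hf.continuousOn_iteratedDerivWithin (by exact_mod_cast le_refl (2:ℕ∞)) hUD
  set m := (a + b) / 2 with hm
  have ham : a ≤ m := by rw [hm]; linarith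
  have hmb : m ≤ b := by rw [hm]; linarith
  have hm0 : 0 ≤ m := le_trans ha ham
  have hmT : m ≤ T := le_trans hmb hb
  have hb0 : 0 ≤ b := le_trans hm0 hmb
  have haT : a ≤ T := le_trans hab hb
  -- FTC facts
  have eq1 : ∫ s in a..m, F1 s = f m - f a := my_ftc hfc hd1 hF1c ha ham hmT
  have eq2 : ∫ s in m..b, F1 s = f b - f m := my_ftc hfc hd1 hF1c hm0 hmb hb
  have eqF1 : ∀ s, a ≤ s → s ≤ b → F1 s - F1 m = ∫ u in m..s, F2 u := by
    intro s h1 h2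
    rcases le_total m s with h | h
    · rw [my_ftc hF1c hd2 hF2c hm0 h (le_trans h2 hb)]
    · rw [intervalIntegral.integral_symm, my_ftc hF1c hd2 hF2c (le_trans ha h1) h hmT]
      abel
  -- integrability helpers
  have hF1i : ∀ c d : ℝ, 0 ≤ c → c ≤ d → d ≤ T → IntervalIntegrable F1 volume c d := by
    intro c d h1 h2 h3
    exact (hF1c.mono (by rw [Set.uIcc_of_le h2]; exact Set.Icc_subset_Icc h1 h3)).intervalIntegrable
  have hF1mi : ∀ c d : ℝ, 0 ≤ c → c ≤ d → d ≤ T →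
      IntervalIntegrable (fun s => F1 s - F1 m) volume c d := by
    intro c d h1 h2 h3
    exact (hF1i c d h1 h2 h3).sub intervalIntegrable_const
  have hnF2c : ContinuousOn (fun u => ‖F2 u‖) S := hF2c.norm
  have hnF2i : ∀ c d : ℝ, 0 ≤ c → c ≤ d → d ≤ T →
      IntervalIntegrable (fun u => ‖F2 u‖) volume c d := by
    intro c d h1 h2 h3
    exact (hnF2c.mono (by rw [Set.uIcc_of_le h2]; exact Set.Icc_subset_Icc h1 h3)).intervalIntegrable
  -- represent the error
  set X := ∫ s in m..b, (F1 s - F1 m) with hXdef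
  set Y := ∫ s in a..m, (F1 s - F1 m) with hYdef
  have hXe : X = (∫ s in m..b, F1 s) - (b - m) • F1 m := by
    rw [hXdef, intervalIntegral.integral_sub (hF1i m b hm0 hmb hb) intervalIntegrable_const,
      intervalIntegral.integral_const]
  have hYe : Y = (∫ s in a..m, F1 s) - (m - a) • F1 m := by
    rw [hYdef, intervalIntegral.integral_sub (hF1i a m ha ham hmT) intervalIntegrable_const,
      intervalIntegral.integral_const]
  have hcancel : (b - m) = (m - a) := by rw [hm]; ring
  have herr : (2 : ℝ)⁻¹ • (f a + f b) - f m = (2 : ℝ)⁻¹ • (X - Y) := by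
    rw [hXe, hYe, hcancel, eq1, eq2]
    module
  -- pointwise bounds
  set C1 := ∫ u in a..m, ‖F2 u‖ with hC1
  set C2 := ∫ u in m..b, ‖F2 u‖ with hC2
  have hC1n : 0 ≤ C1 := intervalIntegral.integral_nonneg ham fun u hu => norm_nonneg _
  have hC2n : 0 ≤ C2 := intervalIntegral.integral_nonneg hmb fun u hu => norm_nonneg _
  have hptX : ∀ s ∈ Set.Icc m b, ‖F1 s - F1 m‖ ≤ C2 := by
    intro s hs
    rw [eqF1 s (le_trans ham hs.1) hs.2]
    calc ‖∫ u in m..s, F2 u‖ ≤ ∫ u in m..s, ‖F2 u‖ :=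
          intervalIntegral.norm_integral_le_integral_norm hs.1
      _ ≤ C2 := by
          have hadd : (∫ u in m..s, ‖F2 u‖) + ∫ u in s..b, ‖F2 u‖ = C2 :=
            intervalIntegral.integral_add_adjacent_intervals
              (hnF2i m s hm0 hs.1 (le_trans hs.2 hb)) (hnF2i s b (le_trans hm0 hs.1) hs.2 hb)
          have hpos : 0 ≤ ∫ u in s..b, ‖F2 u‖ :=
            intervalIntegral.integral_nonneg hs.2 fun u hu => norm_nonneg _
          linarith
  have hptY : ∀ s ∈ Set.Icc a m, ‖F1 s - F1 m‖ ≤ C1 := by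
    intro s hs
    rw [eqF1 s hs.1 (le_trans hs.2 hmb), intervalIntegral.integral_symm]
    calc ‖-∫ u in s..m, F2 u‖ = ‖∫ u in s..m, F2 u‖ := norm_neg _
      _ ≤ ∫ u in s..m, ‖F2 u‖ := intervalIntegral.norm_integral_le_integral_norm hs.2
      _ ≤ C1 := by
          have hadd : (∫ u in a..s, ‖F2 u‖) + ∫ u in s..m, ‖F2 u‖ = C1 :=
            intervalIntegral.integral_add_adjacent_intervals
              (hnF2i a s ha hs.1 (le_trans hs.2 hmT)) (hnF2i s m (le_trans ha hs.1) hs.2 hmT)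
          have hpos : 0 ≤ ∫ u in a..s, ‖F2 u‖ :=
            intervalIntegral.integral_nonneg hs.1 fun u hu => norm_nonneg _
          linarith
  have hXb : ‖X‖ ≤ (b - m) * C2 := by
    calc ‖X‖ ≤ ∫ s in m..b, ‖F1 s - F1 m‖ :=
          intervalIntegral.norm_integral_le_integral_norm hmb
      _ ≤ ∫ s in m..b, C2 :=
          intervalIntegral.integral_mono_on hmb
            ((hF1mi m b hm0 hmb hb).norm) intervalIntegrable_const hptX
      _ = (b - m) * C2 := by rw [intervalIntegral.integral_const, smul_eq_mul]
  have hYb : ‖Y‖ ≤ (m - a) * C1 := by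
    calc ‖Y‖ ≤ ∫ s in a..m, ‖F1 s - F1 m‖ :=
          intervalIntegral.norm_integral_le_integral_norm ham
      _ ≤ ∫ s in a..m, C1 :=
          intervalIntegral.integral_mono_on ham
            ((hF1mi a m ha ham hmT).norm) intervalIntegrable_const hptY
      _ = (m - a) * C1 := by rw [intervalIntegral.integral_const, smul_eq_mul]
  have hCsum : C1 + C2 = ∫ u in a..b, ‖F2 u‖ :=
    intervalIntegral.integral_add_adjacent_intervals (hnF2i a m ha ham hmT) (hnF2i m b hm0 hmb hb)
  have hberr : ‖(2 : ℝ)⁻¹ • (f a + f b) - f m‖ ≤ (b - a) / 4 * ∫ u in a..b, ‖F2 u‖ := by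
    rw [herr]
    have h1 : ‖(2 : ℝ)⁻¹ • (X - Y)‖ = 2⁻¹ * ‖X - Y‖ := by
      rw [norm_smul]; norm_num
    rw [h1]
    have h2 : ‖X - Y‖ ≤ ‖X‖ + ‖Y‖ := norm_sub_le X Y
    have hbm : b - m = (b - a) / 2 := by rw [hm]; ring
    have hma : m - a = (b - a) / 2 := by rw [hm]; ring
    rw [hbm] at hXb
    rw [hma] at hYb
    rw [← hCsum]
    nlinarith [norm_nonneg X, norm_nonneg Y]
  -- Cauchy–Schwarz
  have hcs : (∫ u in a..b, ‖F2 u‖) ^ 2 ≤ (b - a) * ∫ u in a..b, ‖F2 u‖ ^ 2 :=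
    my_cs hab (hnF2c.mono (Set.Icc_subset_Icc ha hb)) (fun u hu => norm_nonneg _)
  have hsq : ‖(2 : ℝ)⁻¹ • (f a + f b) - f m‖ ^ 2 ≤
      ((b - a) / 4 * ∫ u in a..b, ‖F2 u‖) ^ 2 :=
    pow_le_pow_left₀ (norm_nonneg _) hberr 2
  have hInn : 0 ≤ ∫ u in a..b, ‖F2 u‖ := by
    rw [← hCsum]; linarith
  have hba : 0 ≤ b - a := by linarith
  calc ‖(2 : ℝ)⁻¹ • (f a + f b) - f m‖ ^ 2
      ≤ ((b - a) / 4 * ∫ u in a..b, ‖F2 u‖) ^ 2 := hsq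
    _ = (b - a) ^ 2 / 16 * (∫ u in a..b, ‖F2 u‖) ^ 2 := by ring
    _ ≤ (b - a) ^ 2 / 16 * ((b - a) * ∫ u in a..b, ‖F2 u‖ ^ 2) := by
        apply mul_le_mul_of_nonneg_left hcs; positivity
    _ = (b - a) ^ 3 / 16 * ∫ u in a..b, ‖F2 u‖ ^ 2 := by ring

theorem stmt_8 {E : Type*} [NormedAddCommGroup E] [NormedSpace ℝ E] [CompleteSpace E]
    (τ : ℝ) (hτ : 0 < τ) (N : ℕ) (hN : 1 ≤ N) (T : ℝ) (hT : T = N * τ)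
    (f : ℝ → E) (hf : ContDiffOn ℝ 2 f (Set.Icc 0 T)) :
    ∑ n ∈ Finset.range N,
        τ * ‖(2 : ℝ)⁻¹ • (f (n * τ) + f ((n + 1) * τ)) - f ((n + 1 / 2) * τ)‖ ^ 2 ≤
      τ ^ 4 / 16 * ∫ s in (0 : ℝ)..T, ‖iteratedDerivWithin 2 f (Set.Icc 0 T) s‖ ^ 2 := by
  have hN1 : (1 : ℝ) ≤ (N : ℝ) := by exact_mod_cast hN
  have hT0 : 0 < T := by rw [hT]; nlinarith
  have hUD : UniqueDiffOn ℝ (Set.Icc (0:ℝ) T) := uniqueDiffOn_Icc hT0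
  set F2 := iteratedDerivWithin 2 f (Set.Icc 0 T) with hF2
  have hF2c : ContinuousOn F2 (Set.Icc 0 T) :=
    hf.continuousOn_iteratedDerivWithin (by exact_mod_cast le_refl (2:ℕ∞)) hUD
  have hg2c : ContinuousOn (fun s => ‖F2 s‖ ^ 2) (Set.Icc 0 T) := (hF2c.norm).pow 2
  have hsub : ∀ k : ℕ, k + 1 ≤ N → ((k : ℝ) * τ) ≥ 0 ∧ ((k : ℝ) + 1) * τ ≤ T := by
    intro k hk
    constructor
    · positivity
    · rw [hT]
      have : ((k : ℝ) + 1) ≤ (N : ℝ) := by exact_mod_cast hk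
      nlinarith
  have hint : ∀ k < N, IntervalIntegrable (fun s => ‖F2 s‖ ^ 2) volume
      ((fun j : ℕ => (j : ℝ) * τ) k) ((fun j : ℕ => (j : ℝ) * τ) (k + 1)) := by
    intro k hk
    obtain ⟨h1, h2⟩ := hsub k hk
    have hle : (k : ℝ) * τ ≤ ((k : ℝ) + 1) * τ := by nlinarith
    have : IntervalIntegrable (fun s => ‖F2 s‖ ^ 2) volume ((k : ℝ) * τ) (((k : ℝ) + 1) * τ) :=
      (hg2c.mono (by
        rw [Set.uIcc_of_le hle]
        exact Set.Icc_subset_Icc h1 h2)).intervalIntegrable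
    simpa [add_mul] using this
  have hsum : ∑ k ∈ Finset.range N, ∫ s in ((k : ℝ) * τ)..(((k : ℝ) + 1) * τ), ‖F2 s‖ ^ 2 =
      ∫ s in (0 : ℝ)..T, ‖F2 s‖ ^ 2 := by
    have := intervalIntegral.sum_integral_adjacent_intervals (f := fun s => ‖F2 s‖ ^ 2)
      (μ := volume) (a := fun j : ℕ => (j : ℝ) * τ) (n := N) hint
    simp only [Nat.cast_zero, zero_mul] at this
    rw [← hT] at this
    rw [← this]
    apply Finset.sum_congr rfl
    intro k _
    push_cast
    ring_nf
  calc ∑ n ∈ Finset.range N,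
        τ * ‖(2 : ℝ)⁻¹ • (f (n * τ) + f ((n + 1) * τ)) - f ((n + 1 / 2) * τ)‖ ^ 2
      ≤ ∑ n ∈ Finset.range N,
        τ ^ 4 / 16 * ∫ s in ((n : ℝ) * τ)..(((n : ℝ) + 1) * τ), ‖F2 s‖ ^ 2 := by
        apply Finset.sum_le_sum
        intro n hn
        obtain ⟨h1, h2⟩ := hsub n (Finset.mem_range.mp hn)
        have hle : (n : ℝ) * τ ≤ ((n : ℝ) + 1) * τ := by nlinarith
        have hm : ((n : ℝ) + 1 / 2) * τ = ((n : ℝ) * τ + ((n : ℝ) + 1) * τ) / 2 := by ring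
        have hkey := my_interval_est hT0 hf h1 h2 hle
        rw [← hm] at hkey
        have hd : (((n : ℝ) + 1) * τ - (n : ℝ) * τ) = τ := by ring
        rw [hd] at hkey
        calc τ * ‖(2 : ℝ)⁻¹ • (f (n * τ) + f ((n + 1) * τ)) - f ((n + 1 / 2) * τ)‖ ^ 2
            ≤ τ * (τ ^ 3 / 16 * ∫ s in ((n : ℝ) * τ)..(((n : ℝ) + 1) * τ), ‖F2 s‖ ^ 2) :=
              mul_le_mul_of_nonneg_left hkey hτ.le
          _ = τ ^ 4 / 16 * ∫ s in ((n : ℝ) * τ)..(((n : ℝ) + 1) * τ), ‖F2 s‖ ^ 2 := by ring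
    _ = τ ^ 4 / 16 * ∫ s in (0 : ℝ)..T, ‖F2 s‖ ^ 2 := by
        rw [← Finset.mul_sum, hsum]
end

section
/- Let E be a real Banach space, let τ > 0, N ≥ 2, T = Nτ, set t_n = nτ and t_{n+1/2} = (n + 1/2)τ, and let f : ℝ → E be twice continuously differentiable on [0, T]. Then ∑_{n=1}^{N−2} τ ‖ (3f(t_n) − f(t_{n−1}))/2 − f(t_{n+1/2}) ‖² ≤ (τ⁴/4) · ∫_0^T ‖f''(s)‖² ds. -/
open MeasureTheory intervalIntegral Set


lemma cs_bound {E : Type*} [NormedAddCommGroup E] [NormedSpace ℝ E] [CompleteSpace E]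
    {K : ℝ → ℝ} {g : ℝ → E} {a m : ℝ} (ham : a ≤ m)
    (hK : ContinuousOn K (Set.Icc a m)) (hg : ContinuousOn g (Set.Icc a m)) :
    ‖∫ s in a..m, K s • g s‖ ^ 2 ≤ (∫ s in a..m, K s ^ 2) * ∫ s in a..m, ‖g s‖ ^ 2 := by
  set μ := volume.restrict (Set.Ioc a m) with hμ
  haveI : IsFiniteMeasure μ := ⟨by
    rw [hμ, Measure.restrict_apply_univ, Real.volume_Ioc]; exact ENNReal.ofReal_lt_top⟩
  -- measurability
  have hKm : AEStronglyMeasurable (fun s => |K s|) μ :=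
    ((hK.mono Set.Ioc_subset_Icc_self).aestronglyMeasurable measurableSet_Ioc).norm
  have hgm : AEStronglyMeasurable (fun s => ‖g s‖) μ :=
    ((hg.mono Set.Ioc_subset_Icc_self).aestronglyMeasurable measurableSet_Ioc).norm
  -- bounds
  obtain ⟨C1, hC1⟩ := (isCompact_Icc (a := a) (b := m)).exists_bound_of_continuousOn hK
  obtain ⟨C2, hC2⟩ := (isCompact_Icc (a := a) (b := m)).exists_bound_of_continuousOn hg
  have hK2 : MemLp (fun s => |K s|) (ENNReal.ofReal 2) μ := by
    refine MemLp.of_bound hKm C1 ?_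
    refine (ae_restrict_iff' measurableSet_Ioc).2 (.of_forall fun x hx => ?_)
    simpa [abs_abs] using hC1 x (Set.Ioc_subset_Icc_self hx)
  have hg2 : MemLp (fun s => ‖g s‖) (ENNReal.ofReal 2) μ := by
    refine MemLp.of_bound hgm C2 ?_
    refine (ae_restrict_iff' measurableSet_Ioc).2 (.of_forall fun x hx => ?_)
    simpa using hC2 x (Set.Ioc_subset_Icc_self hx)
  have hpq : (2:ℝ).HolderConjugate 2 := ⟨by norm_num, by norm_num, by norm_num⟩
  have holder := MeasureTheory.integral_mul_le_Lp_mul_Lq_of_nonneg hpq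
    (μ := μ) (f := fun s => |K s|) (g := fun s => ‖g s‖)
    (.of_forall fun x => abs_nonneg _) (.of_forall fun x => norm_nonneg _) hK2 hg2
  -- step 1
  have h1 : ‖∫ s in a..m, K s • g s‖ ≤ ∫ x, |K x| * ‖g x‖ ∂μ := by
    calc ‖∫ s in a..m, K s • g s‖ ≤ ∫ s in a..m, ‖K s • g s‖ :=
          intervalIntegral.norm_integral_le_integral_norm ham
      _ = ∫ x, |K x| * ‖g x‖ ∂μ := by
          rw [intervalIntegral.integral_of_le ham]
          simp [norm_smul, Real.norm_eq_abs, hμ]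
  -- rewrite rpow as pow
  have e1 : ∫ x, |K x| ^ (2:ℝ) ∂μ = ∫ s in a..m, K s ^ 2 := by
    rw [intervalIntegral.integral_of_le ham]
    refine integral_congr_ae (.of_forall fun x => ?_)
    simp [Real.rpow_two, sq_abs]
  have e2 : ∫ x, ‖g x‖ ^ (2:ℝ) ∂μ = ∫ s in a..m, ‖g s‖ ^ 2 := by
    rw [intervalIntegral.integral_of_le ham]
    refine integral_congr_ae (.of_forall fun x => ?_)
    simp [Real.rpow_two]
  rw [e1, e2] at holder
  set X := ∫ s in a..m, K s ^ 2 with hX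
  set Y := ∫ s in a..m, ‖g s‖ ^ 2 with hY
  have hX0 : 0 ≤ X := by
    rw [hX, intervalIntegral.integral_of_le ham]
    exact integral_nonneg fun x => sq_nonneg _
  have hY0 : 0 ≤ Y := by
    rw [hY, intervalIntegral.integral_of_le ham]
    exact integral_nonneg fun x => sq_nonneg _
  have h2 : ‖∫ s in a..m, K s • g s‖ ≤ X ^ ((1:ℝ)/2) * Y ^ ((1:ℝ)/2) :=
    h1.trans holder
  have h3 := mul_self_le_mul_self (norm_nonneg _) h2
  calc ‖∫ s in a..m, K s • g s‖ ^ 2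
      = ‖∫ s in a..m, K s • g s‖ * ‖∫ s in a..m, K s • g s‖ := sq _
    _ ≤ (X ^ ((1:ℝ)/2) * Y ^ ((1:ℝ)/2)) * (X ^ ((1:ℝ)/2) * Y ^ ((1:ℝ)/2)) := h3
    _ = X * Y := by
        rw [mul_mul_mul_comm, ← Real.rpow_add' hX0 (by norm_num), ← Real.rpow_add' hY0 (by norm_num)]
        norm_num


lemma taylor_aux {E : Type*} [NormedAddCommGroup E] [NormedSpace ℝ E] [CompleteSpace E]
    {f f1 f2 : ℝ → E} {A B a m : ℝ} (ham : a ≤ m) (hAa : A ≤ a) (hmB : m ≤ B)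
    (hc0 : ContinuousOn f (Set.Icc A B)) (hc1 : ContinuousOn f1 (Set.Icc A B))
    (hc2 : ContinuousOn f2 (Set.Icc A B))
    (hd1 : ∀ s ∈ Set.Ioo A B, HasDerivAt f (f1 s) s)
    (hd2 : ∀ s ∈ Set.Ioo A B, HasDerivAt f1 (f2 s) s) :
    f a = f m + (a - m) • f1 m + ∫ s in m..a, (a - s) • f2 s := by
  have hsub : Set.Icc a m ⊆ Set.Icc A B := Set.Icc_subset_Icc hAa hmB
  have hsub' : Set.Ioo a m ⊆ Set.Ioo A B := Set.Ioo_subset_Ioo hAa hmB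
  set g : ℝ → E := fun s => f s + (a - s) • f1 s with hg
  have hgderiv : ∀ s ∈ Set.Ioo a m, HasDerivAt g ((a - s) • f2 s) s := by
    intro s hs
    have h1 := hd1 s (hsub' hs)
    have h2 := hd2 s (hsub' hs)
    have hc : HasDerivAt (fun x : ℝ => a - x) (-1) s := by
      simpa using (hasDerivAt_id s).const_sub a
    have := h1.add (hc.smul h2)
    convert this using 1
    · rfl
    module
  have hgcont : ContinuousOn g (Set.Icc a m) := by
    apply ContinuousOn.add (hc0.mono hsub)
    exact ContinuousOn.smul (by fun_prop) (hc1.mono hsub)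
  have hint : IntervalIntegrable (fun s => (a - s) • f2 s) volume a m := by
    apply ContinuousOn.intervalIntegrable
    rw [Set.uIcc_of_le ham]
    exact ContinuousOn.smul (by fun_prop) (hc2.mono hsub)
  have hftc := intervalIntegral.integral_eq_sub_of_hasDerivAt_of_le ham hgcont hgderiv hint
  -- hftc : ∫ s in a..m, (a - s) • f2 s = g m - g a
  rw [intervalIntegral.integral_symm]
  rw [hftc, hg]
  simp only [sub_self]
  module

lemma key_bound {E : Type*} [NormedAddCommGroup E] [NormedSpace ℝ E] [CompleteSpace E]
    {f f1 f2 : ℝ → E} {A B a τ : ℝ} (hτ : 0 < τ)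
    (hc0 : ContinuousOn f (Set.Icc A B)) (hc1 : ContinuousOn f1 (Set.Icc A B))
    (hc2 : ContinuousOn f2 (Set.Icc A B))
    (hd1 : ∀ s ∈ Set.Ioo A B, HasDerivAt f (f1 s) s)
    (hd2 : ∀ s ∈ Set.Ioo A B, HasDerivAt f1 (f2 s) s)
    (hAa : A ≤ a) (hmB : a + 3/2 * τ ≤ B) :
    ‖(2 : ℝ)⁻¹ • ((3 : ℝ) • f (a + τ) - f a) - f (a + 3/2 * τ)‖ ^ 2 ≤
      τ ^ 3 / 8 * ∫ s in a..(a + 3/2 * τ), ‖f2 s‖ ^ 2 := by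
  set b := a + τ with hb
  set m := a + 3/2 * τ with hm
  have hab : a ≤ b := by rw [hb]; linarith
  have hbm : b ≤ m := by rw [hb, hm]; linarith
  have ham : a ≤ m := hab.trans hbm
  have hbB : b ≤ B := hbm.trans hmB
  -- Taylor expansions
  have hfa := taylor_aux ham hAa hmB hc0 hc1 hc2 hd1 hd2
  have hfb := taylor_aux hbm (hAa.trans hab) hmB hc0 hc1 hc2 hd1 hd2
  -- kernel
  set K : ℝ → ℝ := fun s => if s ≤ b then (a - s) / 2 else s - m with hK
  have hKcont : ContinuousOn K (Set.Icc a m) := by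
    apply Continuous.continuousOn
    apply Continuous.if_le (by fun_prop) (by fun_prop) continuous_id continuous_const
    intro x hx
    simp only [id_eq] at hx
    rw [hx, hb, hm]; ring
  -- error representation
  have herr : (2 : ℝ)⁻¹ • ((3 : ℝ) • f b - f a) - f m = ∫ s in a..m, K s • f2 s := by
    have hint1 : IntervalIntegrable (fun s => K s • f2 s) volume a b := by
      apply ContinuousOn.intervalIntegrable
      rw [Set.uIcc_of_le hab]
      exact (hKcont.mono (Set.Icc_subset_Icc le_rfl hbm)).smul
        (hc2.mono (Set.Icc_subset_Icc hAa hbB))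
    have hint2 : IntervalIntegrable (fun s => K s • f2 s) volume b m := by
      apply ContinuousOn.intervalIntegrable
      rw [Set.uIcc_of_le hbm]
      exact (hKcont.mono (Set.Icc_subset_Icc hab le_rfl)).smul
        (hc2.mono (Set.Icc_subset_Icc (hAa.trans hab) hmB))
    have hsplit := intervalIntegral.integral_add_adjacent_intervals hint1 hint2
    -- first piece equals ((a-s)/2) • f2 s
    have hp1 : ∫ s in a..b, K s • f2 s = ∫ s in a..b, ((a - s) / 2) • f2 s := by
      apply intervalIntegral.integral_congr
      intro s hs
      rw [Set.uIcc_of_le hab] at hs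
      simp only [hK]
      rw [if_pos hs.2]
    -- second piece equals (s - m) • f2 s
    have hp2 : ∫ s in b..m, K s • f2 s = ∫ s in b..m, (s - m) • f2 s := by
      apply intervalIntegral.integral_congr
      intro s hs
      rw [Set.uIcc_of_le hbm] at hs
      simp only [hK]
      split_ifs with h
      · have : s = b := le_antisymm h hs.1
        rw [this, hb, hm]; norm_num; ring
      · rfl
    -- now compute the error from Taylor
    have hIb : IntervalIntegrable (fun s => (b - s) • f2 s) volume b m := by
      apply ContinuousOn.intervalIntegrable
      rw [Set.uIcc_of_le hbm]
      exact (by fun_prop : ContinuousOn (fun s : ℝ => b - s) (Icc b m)).smul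
        (hc2.mono (Set.Icc_subset_Icc (hAa.trans hab) hmB))
    have hIa1 : IntervalIntegrable (fun s => ((a - s)/2) • f2 s) volume a b := by
      apply ContinuousOn.intervalIntegrable
      rw [Set.uIcc_of_le hab]
      exact (by fun_prop : ContinuousOn (fun s : ℝ => (a - s)/2) (Icc a b)).smul
        (hc2.mono (Set.Icc_subset_Icc hAa hbB))
    have hIa2 : IntervalIntegrable (fun s => ((a - s)/2) • f2 s) volume b m := by
      apply ContinuousOn.intervalIntegrable
      rw [Set.uIcc_of_le hbm]
      exact (by fun_prop : ContinuousOn (fun s : ℝ => (a - s)/2) (Icc b m)).smul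
        (hc2.mono (Set.Icc_subset_Icc (hAa.trans hab) hmB))
    rw [← hsplit, hp1, hp2]
    rw [hfa, hfb]
    -- LHS algebra: reduce to integrals
    have e1 : (2 : ℝ)⁻¹ • ((3 : ℝ) • (f m + (b - m) • f1 m + ∫ s in m..b, (b - s) • f2 s)
        - (f m + (a - m) • f1 m + ∫ s in m..a, (a - s) • f2 s)) - f m
        = ((3/2 * (b - m) - 1/2 * (a - m)) • f1 m)
          + ((3:ℝ)/2) • (∫ s in m..b, (b - s) • f2 s)
          - ((1:ℝ)/2) • (∫ s in m..a, (a - s) • f2 s) := by module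
    rw [e1]
    have hcoef : 3/2 * (b - m) - 1/2 * (a - m) = 0 := by rw [hb, hm]; ring
    rw [hcoef, zero_smul, zero_add]
    -- flip integrals
    rw [intervalIntegral.integral_symm b m, intervalIntegral.integral_symm a m]
    rw [smul_neg, smul_neg, sub_neg_eq_add, neg_add_eq_sub]
    -- split ∫ a..m into a..b + b..m
    have hIa : ∫ s in a..m, ((a - s)/2) • f2 s
        = (∫ s in a..b, ((a - s)/2) • f2 s) + ∫ s in b..m, ((a - s)/2) • f2 s :=
      (intervalIntegral.integral_add_adjacent_intervals hIa1 hIa2).symm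
    have hhalf : ((1:ℝ)/2) • (∫ s in a..m, (a - s) • f2 s)
        = ∫ s in a..m, ((a - s)/2) • f2 s := by
      rw [← intervalIntegral.integral_smul]
      apply intervalIntegral.integral_congr
      intro s _
      simp only [smul_smul]
      congr 1
      ring
    rw [hhalf, hIa]
    have h32 : ((3:ℝ)/2) • (∫ s in b..m, (b - s) • f2 s)
        = ∫ s in b..m, ((3/2) * (b - s)) • f2 s := by
      rw [← intervalIntegral.integral_smul]
      apply intervalIntegral.integral_congr
      intro s _
      simp only [smul_smul]
    rw [h32]
    have hcomb : (∫ s in b..m, ((a - s)/2) • f2 s) - ∫ s in b..m, ((3/2) * (b - s)) • f2 s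
        = ∫ s in b..m, (s - m) • f2 s := by
      rw [← intervalIntegral.integral_sub hIa2 (by
        apply ContinuousOn.intervalIntegrable
        rw [Set.uIcc_of_le hbm]
        exact (by fun_prop : ContinuousOn (fun s : ℝ => (3/2) * (b - s)) (Icc b m)).smul
          (hc2.mono (Set.Icc_subset_Icc (hAa.trans hab) hmB)))]
      apply intervalIntegral.integral_congr
      intro s _
      simp only [← sub_smul]
      congr 1
      rw [hb, hm]; ring
    rw [add_sub_assoc, hcomb]
  rw [herr]
  -- Cauchy-Schwarz
  have hgcont : ContinuousOn f2 (Set.Icc a m) := hc2.mono (Set.Icc_subset_Icc hAa hmB)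
  have hcs := cs_bound ham hKcont hgcont
  -- compute ∫ K^2 = τ^3/8
  have hK2 : (∫ s in a..m, K s ^ 2) = τ ^ 3 / 8 := by
    have i1 : IntervalIntegrable (fun s => K s ^ 2) volume a b := by
      apply ContinuousOn.intervalIntegrable
      rw [Set.uIcc_of_le hab]
      exact (hKcont.mono (Set.Icc_subset_Icc le_rfl hbm)).pow 2
    have i2 : IntervalIntegrable (fun s => K s ^ 2) volume b m := by
      apply ContinuousOn.intervalIntegrable
      rw [Set.uIcc_of_le hbm]
      exact (hKcont.mono (Set.Icc_subset_Icc hab le_rfl)).pow 2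
    rw [← intervalIntegral.integral_add_adjacent_intervals i1 i2]
    have q1 : ∫ s in a..b, K s ^ 2 = ∫ s in a..b, ((a - s)/2) ^ 2 := by
      apply intervalIntegral.integral_congr
      intro s hs
      rw [Set.uIcc_of_le hab] at hs
      simp only [hK]
      rw [if_pos hs.2]
    have q2 : ∫ s in b..m, K s ^ 2 = ∫ s in b..m, (s - m) ^ 2 := by
      apply intervalIntegral.integral_congr
      intro s hs
      rw [Set.uIcc_of_le hbm] at hs
      simp only [hK]
      split_ifs with h
      · have : s = b := le_antisymm h hs.1
        rw [this, hb, hm]; ring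
      · rfl
    rw [q1, q2]
    have c1 : ∫ s in a..b, ((a - s)/2) ^ 2 = τ ^ 3 / 12 := by
      have : ∀ s : ℝ, ((a - s)/2) ^ 2 = (1/4) * (a - s) ^ 2 := by intro s; ring
      simp_rw [this]
      rw [intervalIntegral.integral_const_mul]
      rw [intervalIntegral.integral_comp_sub_left (fun u => u ^ 2) a]
      rw [integral_pow]
      rw [hb]
      ring
    have c2 : ∫ s in b..m, (s - m) ^ 2 = τ ^ 3 / 24 := by
      rw [intervalIntegral.integral_comp_sub_right (fun u => u ^ 2) m]
      rw [integral_pow]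
      rw [hb, hm]
      ring
    rw [c1, c2]
    ring
  rw [hK2] at hcs
  exact hcs

set_option maxHeartbeats 1000000 in
theorem stmt_9 {E : Type*} [NormedAddCommGroup E] [NormedSpace ℝ E] [CompleteSpace E]
    (τ : ℝ) (hτ : 0 < τ) (N : ℕ) (hN : 2 ≤ N) (T : ℝ) (hT : T = N * τ)
    (f : ℝ → E) (hf : ContDiffOn ℝ 2 f (Set.Icc 0 T)) :
    ∑ n ∈ Finset.Icc 1 (N - 2),
        τ * ‖(2 : ℝ)⁻¹ • ((3 : ℝ) • f (n * τ) - f ((n - 1 : ℕ) * τ)) -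
              f ((n + 1 / 2) * τ)‖ ^ 2 ≤
      τ ^ 4 / 4 * ∫ s in (0 : ℝ)..T, ‖iteratedDerivWithin 2 f (Set.Icc 0 T) s‖ ^ 2 := by
  have hNR : (2 : ℝ) ≤ (N : ℝ) := by exact_mod_cast hN
  have hT0 : 0 < T := by rw [hT]; nlinarith
  set S := Set.Icc (0 : ℝ) T with hS
  have huniq : UniqueDiffOn ℝ S := uniqueDiffOn_Icc hT0
  set f1 := iteratedDerivWithin 1 f S with hf1
  set f2 := iteratedDerivWithin 2 f S with hf2
  have hc0 : ContinuousOn f S := hf.continuousOn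
  have hc1 : ContinuousOn f1 S :=
    hf.continuousOn_iteratedDerivWithin (by norm_num) huniq
  have hc2 : ContinuousOn f2 S :=
    hf.continuousOn_iteratedDerivWithin (by norm_num) huniq
  have hd1 : ∀ s ∈ Set.Ioo 0 T, HasDerivAt f (f1 s) s := by
    intro s hs
    have hsS : s ∈ S := Set.Ioo_subset_Icc_self hs
    have hdiff : DifferentiableOn ℝ f S := hf.differentiableOn (by norm_num)
    have h1 : HasDerivWithinAt f (derivWithin f S s) S s :=
      (hdiff s hsS).hasDerivWithinAt
    have h2 : f1 s = derivWithin f S s := congrFun iteratedDerivWithin_one s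
    rw [h2]
    exact h1.hasDerivAt (Icc_mem_nhds hs.1 hs.2)
  have hd2 : ∀ s ∈ Set.Ioo 0 T, HasDerivAt f1 (f2 s) s := by
    intro s hs
    have hsS : s ∈ S := Set.Ioo_subset_Icc_self hs
    have hdiff : DifferentiableOn ℝ f1 S :=
      hf.differentiableOn_iteratedDerivWithin (by norm_num) huniq
    have h1 : HasDerivWithinAt f1 (derivWithin f1 S s) S s :=
      (hdiff s hsS).hasDerivWithinAt
    have h2 : f2 s = derivWithin f1 S s := congrFun (iteratedDerivWithin_succ (n := 1)) s
    rw [h2]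
    exact h1.hasDerivAt (Icc_mem_nhds hs.1 hs.2)
  -- integrability of ‖f2‖^2 on [0,T]
  have hH : IntervalIntegrable (fun s => ‖f2 s‖ ^ 2) volume 0 T := by
    apply ContinuousOn.intervalIntegrable
    rw [Set.uIcc_of_le hT0.le]
    exact hc2.norm.pow 2
  have hHsub : ∀ c d : ℝ, 0 ≤ c → c ≤ d → d ≤ T →
      IntervalIntegrable (fun s => ‖f2 s‖ ^ 2) volume c d := by
    intro c d hc hcd hd
    refine hH.mono_set ?_
    rw [Set.uIcc_of_le hT0.le, Set.uIcc_of_le hcd]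
    exact Set.Icc_subset_Icc hc hd
  have hHnn : ∀ c d : ℝ, 0 ≤ᵐ[volume.restrict (Set.Ioc c d)] fun s => ‖f2 s‖ ^ 2 :=
    fun c d => .of_forall fun x => sq_nonneg _
  -- per-term bound
  have hterm : ∀ n ∈ Finset.Icc 1 (N - 2),
      τ * ‖(2 : ℝ)⁻¹ • ((3 : ℝ) • f (n * τ) - f ((n - 1 : ℕ) * τ)) -
          f ((n + 1 / 2) * τ)‖ ^ 2 ≤
        τ ^ 4 / 8 * ∫ s in (((n : ℝ) - 1) * τ)..(((n : ℝ) + 1) * τ), ‖f2 s‖ ^ 2 := by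
    intro n hn
    rw [Finset.mem_Icc] at hn
    have hn1 : 1 ≤ n := hn.1
    have hn2 : (n : ℝ) + 2 ≤ (N : ℝ) := by
      have : n + 2 ≤ N := by omega
      exact_mod_cast this
    have hnR : (1 : ℝ) ≤ (n : ℝ) := by exact_mod_cast hn1
    set a : ℝ := ((n : ℝ) - 1) * τ with ha
    have hA : (0 : ℝ) ≤ a := by
      apply mul_nonneg (by linarith) hτ.le
    have hB : a + 3/2 * τ ≤ T := by
      rw [ha, hT]; nlinarith
    have e1 : (n : ℝ) * τ = a + τ := by rw [ha]; ring
    have e2 : ((n - 1 : ℕ) : ℝ) * τ = a := by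
      rw [ha, Nat.cast_sub hn1]; push_cast; ring
    have e3 : ((n : ℝ) + 1 / 2) * τ = a + 3/2 * τ := by rw [ha]; ring
    rw [e1, e2, e3]
    have hkey := key_bound (f := f) (f1 := f1) (f2 := f2) (A := 0) (B := T)
      hτ hc0 hc1 hc2 hd1 hd2 hA hB
    have hmono : (∫ s in a..(a + 3/2 * τ), ‖f2 s‖ ^ 2) ≤
        ∫ s in (((n : ℝ) - 1) * τ)..(((n : ℝ) + 1) * τ), ‖f2 s‖ ^ 2 := by
      apply intervalIntegral.integral_mono_interval (le_of_eq ha.symm)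
        (by nlinarith) (by rw [ha]; nlinarith) (hHnn _ _)
      exact hHsub _ _ hA (by nlinarith) (by rw [hT]; nlinarith)
    calc τ * ‖(2 : ℝ)⁻¹ • ((3 : ℝ) • f (a + τ) - f a) - f (a + 3/2 * τ)‖ ^ 2
        ≤ τ * (τ ^ 3 / 8 * ∫ s in a..(a + 3/2 * τ), ‖f2 s‖ ^ 2) := by
          exact mul_le_mul_of_nonneg_left hkey hτ.le
      _ = τ ^ 4 / 8 * ∫ s in a..(a + 3/2 * τ), ‖f2 s‖ ^ 2 := by ring
      _ ≤ τ ^ 4 / 8 * ∫ s in (((n : ℝ) - 1) * τ)..(((n : ℝ) + 1) * τ), ‖f2 s‖ ^ 2 := by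
          apply mul_le_mul_of_nonneg_left hmono (by positivity)
  -- sum of the interval integrals
  have hsum : ∑ n ∈ Finset.Icc 1 (N - 2),
      (∫ s in (((n : ℝ) - 1) * τ)..(((n : ℝ) + 1) * τ), ‖f2 s‖ ^ 2) ≤
      2 * ∫ s in (0 : ℝ)..T, ‖f2 s‖ ^ 2 := by
    have hNcast : ((N - 2 : ℕ) : ℝ) = (N : ℝ) - 2 := by
      rw [Nat.cast_sub hN]; norm_num
    have step1 : ∑ n ∈ Finset.Icc 1 (N - 2),
        (∫ s in (((n : ℝ) - 1) * τ)..(((n : ℝ) + 1) * τ), ‖f2 s‖ ^ 2) =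
        ∑ i ∈ Finset.range (N - 2),
          ((∫ s in ((i : ℝ) * τ)..(((i : ℝ) + 1) * τ), ‖f2 s‖ ^ 2) +
           ∫ s in (((i : ℝ) + 1) * τ)..(((i : ℝ) + 2) * τ), ‖f2 s‖ ^ 2) := by
      rw [← Finset.Ico_add_one_right_eq_Icc, Finset.sum_Ico_eq_sum_range]
      have hrw : N - 2 + 1 - 1 = N - 2 := by omega
      rw [hrw]
      apply Finset.sum_congr rfl
      intro i hi
      rw [Finset.mem_range] at hi
      have hiN : (i : ℝ) + 2 ≤ (N : ℝ) := by
        have : i + 2 ≤ N := by omega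
        exact_mod_cast this
      have l1 : (((1 + i : ℕ) : ℝ) - 1) * τ = (i : ℝ) * τ := by push_cast; ring
      have l2 : (((1 + i : ℕ) : ℝ) + 1) * τ = ((i : ℝ) + 2) * τ := by push_cast; ring
      rw [l1, l2]
      have j1 : IntervalIntegrable (fun s => ‖f2 s‖ ^ 2) volume
          ((i : ℝ) * τ) (((i : ℝ) + 1) * τ) :=
        hHsub _ _ (by positivity) (by nlinarith) (by rw [hT]; nlinarith)
      have j2 : IntervalIntegrable (fun s => ‖f2 s‖ ^ 2) volume
          (((i : ℝ) + 1) * τ) (((i : ℝ) + 2) * τ) :=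
        hHsub _ _ (by positivity) (by nlinarith) (by rw [hT]; nlinarith)
      rw [← intervalIntegral.integral_add_adjacent_intervals j1 j2]
    have b1 : ∑ i ∈ Finset.range (N - 2),
        (∫ s in ((i : ℝ) * τ)..(((i : ℝ) + 1) * τ), ‖f2 s‖ ^ 2) =
        ∫ s in (0 : ℝ)..(((N - 2 : ℕ) : ℝ) * τ), ‖f2 s‖ ^ 2 := by
      have hint1 : ∀ k, k < N - 2 → IntervalIntegrable (fun s => ‖f2 s‖ ^ 2) volume
          ((k : ℝ) * τ) (((k + 1 : ℕ) : ℝ) * τ) := by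
        intro k hk
        have hkN : (k : ℝ) + 1 ≤ (N : ℝ) := by
          have : k + 1 ≤ N := by omega
          exact_mod_cast this
        have l1 : ((k + 1 : ℕ) : ℝ) * τ = ((k : ℝ) + 1) * τ := by push_cast; ring
        rw [l1]
        exact hHsub _ _ (by positivity) (by nlinarith) (by rw [hT]; nlinarith)
      have hadj := intervalIntegral.sum_integral_adjacent_intervals
        (a := fun k : ℕ => (k : ℝ) * τ) (n := N - 2)
        (f := fun s => ‖f2 s‖ ^ 2) (μ := volume) hint1
      calc ∑ i ∈ Finset.range (N - 2),
          (∫ s in ((i : ℝ) * τ)..(((i : ℝ) + 1) * τ), ‖f2 s‖ ^ 2)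
          = ∑ i ∈ Finset.range (N - 2),
            (∫ s in ((i : ℝ) * τ)..(((i + 1 : ℕ) : ℝ) * τ), ‖f2 s‖ ^ 2) := by
            apply Finset.sum_congr rfl
            intro i _
            congr 1
            push_cast; ring
        _ = ∫ s in (((0 : ℕ) : ℝ) * τ)..(((N - 2 : ℕ) : ℝ) * τ), ‖f2 s‖ ^ 2 := hadj
        _ = ∫ s in (0 : ℝ)..(((N - 2 : ℕ) : ℝ) * τ), ‖f2 s‖ ^ 2 := by norm_num
    have b2 : ∑ i ∈ Finset.range (N - 2),
        (∫ s in (((i : ℝ) + 1) * τ)..(((i : ℝ) + 2) * τ), ‖f2 s‖ ^ 2) =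
        ∫ s in ((0 : ℝ) + 1) * τ..((((N - 2 : ℕ) : ℝ)) + 1) * τ, ‖f2 s‖ ^ 2 := by
      have hint2 : ∀ k, k < N - 2 → IntervalIntegrable (fun s => ‖f2 s‖ ^ 2) volume
          (((k : ℝ) + 1) * τ) ((((k + 1 : ℕ) : ℝ) + 1) * τ) := by
        intro k hk
        have hkN : (k : ℝ) + 2 ≤ (N : ℝ) := by
          have : k + 2 ≤ N := by omega
          exact_mod_cast this
        have l1 : (((k + 1 : ℕ) : ℝ) + 1) * τ = ((k : ℝ) + 2) * τ := by push_cast; ring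
        rw [l1]
        exact hHsub _ _ (by positivity) (by nlinarith) (by rw [hT]; nlinarith)
      have hadj := intervalIntegral.sum_integral_adjacent_intervals
        (a := fun k : ℕ => ((k : ℝ) + 1) * τ) (n := N - 2)
        (f := fun s => ‖f2 s‖ ^ 2) (μ := volume) hint2
      calc ∑ i ∈ Finset.range (N - 2),
          (∫ s in (((i : ℝ) + 1) * τ)..(((i : ℝ) + 2) * τ), ‖f2 s‖ ^ 2)
          = ∑ i ∈ Finset.range (N - 2),
            (∫ s in (((i : ℝ) + 1) * τ)..((((i + 1 : ℕ) : ℝ) + 1) * τ), ‖f2 s‖ ^ 2) := by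
            apply Finset.sum_congr rfl
            intro i _
            congr 1
            push_cast; ring
        _ = ∫ s in ((((0 : ℕ) : ℝ) + 1) * τ)..((((N - 2 : ℕ) : ℝ) + 1) * τ), ‖f2 s‖ ^ 2 := hadj
        _ = ∫ s in ((0 : ℝ) + 1) * τ..((((N - 2 : ℕ) : ℝ)) + 1) * τ, ‖f2 s‖ ^ 2 := by norm_num
    rw [step1, Finset.sum_add_distrib, b1, b2]
    have m1 : (∫ s in (0 : ℝ)..(((N - 2 : ℕ) : ℝ) * τ), ‖f2 s‖ ^ 2) ≤
        ∫ s in (0 : ℝ)..T, ‖f2 s‖ ^ 2 := by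
      apply intervalIntegral.integral_mono_interval le_rfl
        (by rw [hNcast]; nlinarith) (by rw [hNcast, hT]; nlinarith) (hHnn _ _) hH
    have m2 : (∫ s in ((0 : ℝ) + 1) * τ..((((N - 2 : ℕ) : ℝ)) + 1) * τ, ‖f2 s‖ ^ 2) ≤
        ∫ s in (0 : ℝ)..T, ‖f2 s‖ ^ 2 := by
      apply intervalIntegral.integral_mono_interval (by nlinarith)
        (by rw [hNcast]; nlinarith) (by rw [hNcast, hT]; nlinarith) (hHnn _ _) hH
    linarith
  calc ∑ n ∈ Finset.Icc 1 (N - 2),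
      τ * ‖(2 : ℝ)⁻¹ • ((3 : ℝ) • f (n * τ) - f ((n - 1 : ℕ) * τ)) -
          f ((n + 1 / 2) * τ)‖ ^ 2
      ≤ ∑ n ∈ Finset.Icc 1 (N - 2),
        τ ^ 4 / 8 * ∫ s in (((n : ℝ) - 1) * τ)..(((n : ℝ) + 1) * τ), ‖f2 s‖ ^ 2 :=
        Finset.sum_le_sum hterm
    _ = τ ^ 4 / 8 * ∑ n ∈ Finset.Icc 1 (N - 2),
        (∫ s in (((n : ℝ) - 1) * τ)..(((n : ℝ) + 1) * τ), ‖f2 s‖ ^ 2) := by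
        rw [Finset.mul_sum]
    _ ≤ τ ^ 4 / 8 * (2 * ∫ s in (0 : ℝ)..T, ‖f2 s‖ ^ 2) :=
        mul_le_mul_of_nonneg_left hsum (by positivity)
    _ = τ ^ 4 / 4 * ∫ s in (0 : ℝ)..T, ‖f2 s‖ ^ 2 := by ring
end
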